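/- If the update flow network G(C) constructed from a 3-SAT formula C admits a feasible update sequence, then C is satisfiable: defining σ(x_j) = 1 if (w_1^j, X) is resolved before round r = (round of update (s,B)), σ(x_j) = 0 if (w_1^j, X̄) is resolved before r, and arbitrarily otherwise, yields a well-defined satisfying assignment. -/

import Mathlib

/-!
A formal model of congestion-free flow rerouting (network update scheduling).
An update flow network consists of a source `s`, a terminal `t`, edge
capacities, and `k` update flow pairs, each given by an old `s`-`t` path and
an update (new) `s`-`t` path (represented as lists of vertices) with a demand.
An update sequence assigns to every update `(v, i)` (vertex `v`, pair `i`) a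
round; it is feasible if resolving all updates of earlier rounds together with
any subset of the current round always leaves, for every pair, a unique valid
(capacity-respecting) transient `s`-`t` path among the active edges, and the
family of transient paths jointly respects the capacities.
-/

namespace FlowUpdate

variable {V : Type} [DecidableEq V] {k : ℕ}

/-- The edges of a path given as a list of vertices. -/
def edgesOf (p : List V) : List (V × V) := p.zip p.tail

/-- The subpath of `p` from vertex `a` to vertex `z` (inclusive). -/
def segment (p : List V) (a z : V) : List V :=
  ((p.dropWhile (fun v => decide (v ≠ a))).takeWhile (fun v => decide (v ≠ z))) ++ [z]

/-- The outgoing edge of `v` on the path `p`, if any. -/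
def outEdge (p : List V) (v : V) : Option (V × V) :=
  (edgesOf p).find? (fun e => decide (e.1 = v))

/-- An update flow network with `k` update flow pairs. -/
structure UFN (V : Type) (k : ℕ) where
  s : V
  t : V
  cap : V → V → ℕ
  old : Fin k → List V
  new : Fin k → List V
  demand : Fin k → ℕ

namespace UFN

/-- After resolving the set of updates `U`, edge `e` is active for pair `i` iff
it is an old edge whose tail is not yet updated, or a new edge whose tail is
updated. -/
def active (G : UFN V k) (U : Set (V × Fin k)) (i : Fin k) (e : V × V) : Prop :=
  (e ∈ edgesOf (G.old i) ∧ (e.1, i) ∉ U) ∨ (e ∈ edgesOf (G.new i) ∧ (e.1, i) ∈ U)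

/-- `p` is a simple `s`-`t` path all of whose edges satisfy `E`. -/
def IsPathIn (E : V × V → Prop) (s t : V) (p : List V) : Prop :=
  p.head? = some s ∧ p.getLast? = some t ∧ List.Chain' (fun u v => E (u, v)) p ∧ p.Nodup

/-- `p` respects the capacities for the demand of pair `i`. -/
def ValidPath (G : UFN V k) (i : Fin k) (p : List V) : Prop :=
  ∀ e ∈ edgesOf p, G.demand i ≤ G.cap e.1 e.2

/-- `T` is the unique valid transient path of pair `i` after resolving `U`. -/
def TransientPair (G : UFN V k) (U : Set (V × Fin k)) (i : Fin k) (T : List V) : Prop :=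
  IsPathIn (G.active U i) G.s G.t T ∧ G.ValidPath i T ∧
    ∀ p, IsPathIn (G.active U i) G.s G.t p → G.ValidPath i p → p = T

/-- After resolving `U`, every pair has a unique valid transient path, and the
family of transient paths jointly respects the capacities. -/
def TransientFamily (G : UFN V k) (U : Set (V × Fin k)) : Prop :=
  ∃ T : Fin k → List V,
    (∀ i, G.TransientPair U i (T i)) ∧
    (∀ u v : V, (∑ i : Fin k, if (u, v) ∈ edgesOf (T i) then G.demand i else 0) ≤ G.cap u v)

/-- An update sequence (an assignment of rounds to all updates) is feasible if
after resolving all updates of rounds `< r` together with any subset of the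
updates of round `r`, all pairs admit a transient family. -/
def Feasible (G : UFN V k) (R : V × Fin k → ℕ) : Prop :=
  ∀ r : ℕ, ∀ S : Set (V × Fin k), (∀ u ∈ S, R u = r) →
    G.TransientFamily ({u | R u < r} ∪ S)

/-- `p` is a simple path from the source to the terminal. -/
def IsStPath (G : UFN V k) (p : List V) : Prop :=
  p.head? = some G.s ∧ p.getLast? = some G.t ∧ p.Nodup

/-- Well-formedness of an update flow network: all old and new flows are simple
`s`-`t` paths, each pair forms a DAG, each new path respects capacities for its
own demand, and both the old family and the new family jointly respect the
capacities. -/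
def WellFormed (G : UFN V k) : Prop :=
  (∀ i, G.IsStPath (G.old i) ∧ G.IsStPath (G.new i)) ∧
  (∀ i, ∃ ord : V → ℕ, ∀ e ∈ edgesOf (G.old i) ++ edgesOf (G.new i), ord e.1 < ord e.2) ∧
  (∀ i, G.ValidPath i (G.new i)) ∧
  (∀ u v : V, (∑ i : Fin k, if (u, v) ∈ edgesOf (G.old i) then G.demand i else 0) ≤ G.cap u v) ∧
  (∀ u v : V, (∑ i : Fin k, if (u, v) ∈ edgesOf (G.new i) then G.demand i else 0) ≤ G.cap u v)

/-- The common vertices of the old and new path of pair `i`, in path order. -/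
def commons (G : UFN V k) (i : Fin k) : List V :=
  (G.old i).filter (fun v => decide (v ∈ G.new i))

/-- A block of pair `i` is a pair `(a, z)` of consecutive common vertices of the
old and new paths of `i`. -/
def IsBlock (G : UFN V k) (i : Fin k) (b : V × V) : Prop :=
  b ∈ edgesOf (G.commons i)

/-- A (candidate) block: a pair index together with its start and end vertices. -/
abbrev Blk (V : Type) (k : ℕ) := Fin k × V × V

def IsBlk (G : UFN V k) (b : Blk V k) : Prop := G.IsBlock b.1 b.2

/-- The old-path segment of a block. -/
def blkOldSeg (G : UFN V k) (b : Blk V k) : List V := segment (G.old b.1) b.2.1 b.2.2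

/-- The update-path segment of a block. -/
def blkNewSeg (G : UFN V k) (b : Blk V k) : List V := segment (G.new b.1) b.2.1 b.2.2

/-- Block `b1` depends on block `b2` (written `b1 → b2`) if they belong to
different pairs and some edge lies on `b1`'s update path and on `b2`'s old path
with capacity less than the sum of the two demands. -/
def Dep (G : UFN V k) (b1 b2 : Blk V k) : Prop :=
  G.IsBlk b1 ∧ G.IsBlk b2 ∧ b1.1 ≠ b2.1 ∧
  ∃ e : V × V, e ∈ edgesOf (G.blkNewSeg b1) ∧ e ∈ edgesOf (G.blkOldSeg b2) ∧
    G.cap e.1 e.2 < G.demand b1.1 + G.demand b2.1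

/-- The dependency graph contains a directed cycle. -/
def HasDepCycle (G : UFN V k) : Prop := ∃ b : Blk V k, Relation.TransGen G.Dep b b

/-- The number of rounds used by an update sequence. -/
def numRounds [Fintype V] (R : V × Fin k → ℕ) : ℕ :=
  (Finset.image R Finset.univ).card

/-- An update `(v, i)` is empty if `v`'s outgoing old edge and outgoing new edge
for pair `i` coincide (in particular if `v` has no outgoing edge for pair `i`). -/
def EmptyUpd (G : UFN V k) (u : V × Fin k) : Prop :=
  outEdge (G.old u.2) u.1 = outEdge (G.new u.2) u.1

instance (G : UFN V k) (u : V × Fin k) : Decidable (G.EmptyUpd u) :=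
  inferInstanceAs (Decidable (outEdge (G.old u.2) u.1 = outEdge (G.new u.2) u.1))

/-- `R` updates every block in (at most) 3 consecutive rounds: first all internal
update-path vertices of the block, then the start vertex, then all old-path-only
vertices of the block. -/
def BlockPattern (G : UFN V k) (R : V × Fin k → ℕ) : Prop :=
  ∀ b : Blk V k, G.IsBlk b → ∃ r : ℕ,
    (∀ v ∈ G.blkNewSeg b, v ≠ b.2.1 → v ≠ b.2.2 → R (v, b.1) = r) ∧
    R (b.2.1, b.1) = r + 1 ∧
    (∀ v ∈ G.blkOldSeg b, v ∉ G.new b.1 → R (v, b.1) = r + 2)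

/-- The size of the network (total length of the flow paths). -/
def size (G : UFN V k) : ℕ := ∑ i : Fin k, ((G.old i).length + (G.new i).length)

end UFN

end FlowUpdate

namespace FlowUpdate

/-! The update flow network `GC C n` constructed from a 3-SAT formula `C` with
`n` variables, as in the NP-hardness reduction.  The six flow pairs are indexed
by `Fin 6`: `0 = X`, `1 = X̄`, `2,3,4 = D₁,D₂,D₃`, `5 = B`; all have demand 1. -/

/-- A 3-SAT clause: three literals, each a variable index with a polarity. -/
abbrev Clause := Fin 3 → ℕ × Bool

/-- `σ` satisfies the formula `C`. -/
def Satisfies (C : List Clause) (σ : ℕ → Bool) : Prop :=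
  ∀ cl ∈ C, ∃ p : Fin 3, σ (cl p).1 = (cl p).2

/-- All variable indices occurring in `C` are `< n`. -/
def GoodFormula (C : List Clause) (n : ℕ) : Prop :=
  ∀ cl ∈ C, ∀ p : Fin 3, (cl p).1 < n

/-- The vertices of the network `GC C n`. -/
inductive GV where
  | s | t
  | u (i : ℕ) | v (i : ℕ)
  | uu (i : ℕ) (j : Fin 3) | vv (i : ℕ) (j : Fin 3)
  | w1 (j : ℕ) | w2 (j : ℕ)
deriving DecidableEq

/-- Capacities: `(w1 j, w2 j)` has capacity 2, `(u i, v i)` capacity 3, the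
detour edges `(uu i p, vv i p)` capacity 1, all other edges capacity 6. -/
def capC : GV → GV → ℕ
  | .w1 j, .w2 j' => if j = j' then 2 else 6
  | .u i, .v i' => if i = i' then 3 else 6
  | .uu i p, .vv i' p' => if i = i' ∧ p = p' then 1 else 6
  | _, _ => 6

/-- The occurrences (clause index, position) of the literal `(j, pol)` in `C`. -/
def occ (C : List Clause) (j : ℕ) (pol : Bool) : List (ℕ × Fin 3) :=
  (List.range C.length).flatMap fun i =>
    (List.finRange 3).filterMap fun p =>
      if (C.getD i (fun _ => (0, true))) p = (j, pol) then some (i, p) else none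

/-- The detour vertices visited by the old path of the literal `(j, pol)`. -/
def litPath (C : List Clause) (j : ℕ) (pol : Bool) : List GV :=
  (occ C j pol).flatMap fun ip => [GV.uu ip.1 ip.2, GV.vv ip.1 ip.2]

/-- The old path of `X` (`pol = true`) resp. of `X̄` (`pol = false`). -/
def Xold (C : List Clause) (n : ℕ) (pol : Bool) : List GV :=
  [GV.s] ++ ((List.range n).flatMap fun j => [GV.w1 j] ++ litPath C j pol ++ [GV.w2 j]) ++ [GV.t]

/-- The update path of `X` and `X̄`, which is also the old path of `B`. -/
def Xupd (n : ℕ) : List GV :=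
  [GV.s] ++ ((List.range n).flatMap fun j => [GV.w1 j, GV.w2 j]) ++ [GV.t]

/-- The old path of each `D_j`, which is also the update path of `B`. -/
def Dold (m : ℕ) : List GV :=
  [GV.s] ++ ((List.range m).flatMap fun i => [GV.u i, GV.v i]) ++ [GV.t]

/-- The update path of `D_j`, detouring each clause edge through `(uu i j, vv i j)`. -/
def Dupd (m : ℕ) (j : Fin 3) : List GV :=
  [GV.s] ++ ((List.range m).flatMap fun i => [GV.u i, GV.uu i j, GV.vv i j, GV.v i]) ++ [GV.t]

/-- The update flow network constructed from the 3-SAT formula `C` with `n`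
variables. -/
def GC (C : List Clause) (n : ℕ) : UFN GV 6 where
  s := GV.s
  t := GV.t
  cap := capC
  old := ![Xold C n true, Xold C n false, Dold C.length, Dold C.length, Dold C.length, Xupd n]
  new := ![Xupd n, Xupd n, Dupd C.length 0, Dupd C.length 1, Dupd C.length 2, Dold C.length]
  demand := fun _ => 1

end FlowUpdate

namespace FlowUpdate

set_option linter.unusedSectionVars false

section Infra
variable {V : Type} [Inhabited V]

lemma edgesOf_nil : edgesOf ([] : List V) = [] := rfl
lemma edgesOf_single (a : V) : edgesOf [a] = [] := rfl

lemma edgesOf_cons {q : List V} (hq : q ≠ []) (a : V) :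
    edgesOf (a :: q) = (a, q.headI) :: edgesOf q := by
  cases q with
  | nil => exact absurd rfl hq
  | cons b q' => rfl

lemma headI_append {p : List V} (hp : p ≠ []) (q : List V) : (p ++ q).headI = p.headI := by
  cases p with
  | nil => exact absurd rfl hp
  | cons a p' => rfl

lemma getLastI_cons {a : V} {l : List V} (hl : l ≠ []) : (a :: l).getLastI = l.getLastI := by
  cases l with
  | nil => exact absurd rfl hl
  | cons b l' =>
    simp [List.getLastI_eq_getLast?, List.getLast?_cons_cons]

lemma getLastI_concat (l : List V) (a : V) : (l ++ [a]).getLastI = a := by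
  induction l with
  | nil => rfl
  | cons b l ih => rw [List.cons_append, getLastI_cons (by simp), ih]

lemma edgesOf_append {p q : List V} (hp : p ≠ []) (hq : q ≠ []) :
    edgesOf (p ++ q) = edgesOf p ++ (p.getLastI, q.headI) :: edgesOf q := by
  induction p with
  | nil => exact absurd rfl hp
  | cons a p ih =>
    cases p with
    | nil => exact edgesOf_cons hq a
    | cons b p' =>
      have ha : edgesOf (a :: ((b :: p') ++ q)) = (a, b) :: edgesOf ((b :: p') ++ q) := by
        rw [edgesOf_cons (by simp)]; rfl
      have hb : edgesOf (a :: b :: p') = (a, b) :: edgesOf (b :: p') := rfl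
      calc edgesOf ((a :: b :: p') ++ q) = (a, b) :: edgesOf ((b :: p') ++ q) := ha
        _ = (a, b) :: (edgesOf (b :: p') ++ ((b :: p').getLastI, q.headI) :: edgesOf q) := by
            rw [ih (by simp)]
        _ = edgesOf (a :: b :: p') ++ ((a :: b :: p').getLastI, q.headI) :: edgesOf q := by
            rw [hb, getLastI_cons (l := b :: p') (by simp)]; rfl

lemma fst_mem_of_mem_edgesOf {l : List V} {e : V × V} (h : e ∈ edgesOf l) : e.1 ∈ l :=
  (List.of_mem_zip h).1

lemma snd_mem_of_mem_edgesOf {l : List V} {e : V × V} (h : e ∈ edgesOf l) : e.2 ∈ l :=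
  List.mem_of_mem_tail (List.of_mem_zip h).2

lemma edgesOf_ne_nil_src {l : List V} {e : V × V} (h : e ∈ edgesOf l) : l ≠ [] := by
  rintro rfl; simp [edgesOf] at h

lemma succ_exists {E : V × V → Prop} {T : List V} {t a : V}
    (hlast : T.getLast? = some t) (hchain : List.Chain' (fun u v => E (u, v)) T)
    (ha : a ∈ T) (hat : a ≠ t) : ∃ x, (a, x) ∈ edgesOf T ∧ E (a, x) := by
  induction T with
  | nil => simp at ha
  | cons b T ih =>
    cases T with
    | nil =>
      simp at ha hlast; subst ha; exact absurd hlast hat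
    | cons c T' =>
      rcases List.mem_cons.1 ha with rfl | ha
      · refine ⟨c, by simp [edgesOf], ?_⟩
        exact (List.isChain_cons_cons.1 hchain).1
      · have hlast' : (c :: T').getLast? = some t := by
          rwa [List.getLast?_cons_cons] at hlast
        obtain ⟨x, hx1, hx2⟩ := ih hlast' (List.isChain_cons_cons.1 hchain).2 ha
        exact ⟨x, by rw [edgesOf_cons (by simp)]; exact List.mem_cons_of_mem _ hx1, hx2⟩

end Infra
end FlowUpdate
namespace FlowUpdate
set_option linter.unusedSectionVars false

section Flat
variable {V : Type} [Inhabited V] {α : Type} [Inhabited α]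

lemma flatMap_append_ne_nil (l : List α) (B : α → List V) (b : V) :
    l.flatMap B ++ [b] ≠ [] := by simp

lemma edgesOf_flat_aux (B : α → List V) (b : V) (hB : ∀ x, B x ≠ []) :
    ∀ (l : List α) {e : V × V}, e ∈ edgesOf (l.flatMap B ++ [b]) →
      (∃ x ∈ l, e ∈ edgesOf (B x)) ∨
      (∃ q ∈ edgesOf l, e = ((B q.1).getLastI, (B q.2).headI)) ∨
      (l ≠ [] ∧ e = ((B l.getLastI).getLastI, b)) := by
  intro l
  induction l with
  | nil => intro e he; simp [edgesOf] at he
  | cons x l ih =>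
    intro e he
    rw [List.flatMap_cons, List.append_assoc,
      edgesOf_append (hB x) (flatMap_append_ne_nil l B b)] at he
    rcases List.mem_append.1 he with he | he
    · exact Or.inl ⟨x, by simp, he⟩
    rcases List.mem_cons.1 he with he | he
    · -- crossing edge from B x
      cases l with
      | nil =>
        refine Or.inr (Or.inr ⟨by simp, ?_⟩)
        exact he
      | cons y l' =>
        refine Or.inr (Or.inl ⟨(x, y), by rw [edgesOf_cons (by simp)]; simp, ?_⟩)
        rw [he]
        congr 1
        rw [List.flatMap_cons, List.append_assoc, headI_append (hB y)]
    · rcases ih he with ⟨z, hz, hze⟩ | ⟨q, hq, hqe⟩ | ⟨hl, hle⟩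
      · exact Or.inl ⟨z, List.mem_cons_of_mem _ hz, hze⟩
      · refine Or.inr (Or.inl ⟨q, ?_, hqe⟩)
        rw [edgesOf_cons (edgesOf_ne_nil_src hq)]
        exact List.mem_cons_of_mem _ hq
      · exact Or.inr (Or.inr ⟨by simp, by rw [getLastI_cons hl]; exact hle⟩)

lemma nodup_succ {l : List α} {x y : α} (hn : l.Nodup) (h : (x, y) ∈ edgesOf l) :
    ∀ l1 l2, l = l1 ++ x :: l2 → ∃ h2 : l2 ≠ [], y = l2.headI := by
  induction l with
  | nil => simp [edgesOf] at h
  | cons d l ih =>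
    intro l1 l2 hl
    cases l with
    | nil =>
      simp [edgesOf] at h
    | cons c l' =>
      rw [edgesOf_cons (by simp)] at h
      rcases List.mem_cons.1 h with hxy | hxy
      · -- (x,y) = (d, c)
        have hx : x = d := by simpa using congrArg Prod.fst hxy
        have hy : y = c := by simpa using congrArg Prod.snd hxy
        cases l1 with
        | nil =>
          simp at hl
          exact ⟨by simp [← hl.2], by simp [hy, ← hl.2]⟩
        | cons a l1' =>
          -- d = a, and x ∈ l1' ++ x :: l2 = c :: l', but x = d = a ∉ tail: contradiction
          simp only [List.cons_append, List.cons.injEq] at hl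
          exfalso
          have hx2 : x ∈ c :: l' := by
            rw [hl.2]; exact List.mem_append_right _ List.mem_cons_self
          exact (List.nodup_cons.1 hn).1 (by rw [hx] at hx2; exact hx2)
      · -- (x,y) ∈ edgesOf (c :: l')
        cases l1 with
        | nil =>
          -- x = d, but x ∈ c :: l' (src of an edge), contra nodup
          simp at hl
          exfalso
          have hmem : x ∈ c :: l' := fst_mem_of_mem_edgesOf hxy
          exact (List.nodup_cons.1 hn).1 (by rw [hl.1]; exact hmem)
        | cons a l1' =>
          simp only [List.cons_append, List.cons.injEq] at hl
          exact ih (List.nodup_cons.1 hn).2 hxy l1' l2 hl.2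

lemma mem_getLastI {l : List α} (hl : l ≠ []) : l.getLastI ∈ l := by
  rw [List.getLastI_eq_getLast?, List.getLast?_eq_getLast hl]
  exact List.getLast_mem hl

lemma getLastI_append {l2 : List α} (hl2 : l2 ≠ []) (l1 : List α) :
    (l1 ++ l2).getLastI = l2.getLastI := by
  induction l1 with
  | nil => rfl
  | cons a l1' ih =>
    rw [List.cons_append, getLastI_cons (fun hh => hl2 (List.append_eq_nil_iff.1 hh).2), ih]

lemma nodup_getLastI {l1 l2 : List α} {x : α} (hn : (l1 ++ x :: l2).Nodup)
    (h : (l1 ++ x :: l2).getLastI = x) : l2 = [] := by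
  cases l2 with
  | nil => rfl
  | cons c l2' =>
    exfalso
    have h1 := getLastI_append (l2 := x :: c :: l2') (by simp) l1
    rw [h, getLastI_cons (by simp)] at h1
    have h2 : x ∈ c :: l2' := by rw [h1]; exact mem_getLastI (by simp)
    have h3 : x ∉ c :: l2' :=
      (List.nodup_cons.1 (List.Nodup.of_append_right hn)).1
    exact h3 h2

end Flat

section RangeLemmas

lemma edgesOf_range' : ∀ (k s : ℕ) {x y : ℕ}, (x, y) ∈ edgesOf (List.range' s k) →
    y = x + 1 ∧ s ≤ x ∧ y < s + k := by
  intro k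
  induction k with
  | zero => intro s x y h; simp [edgesOf] at h
  | succ k ih =>
    intro s x y h
    cases k with
    | zero => simp [edgesOf] at h
    | succ k' =>
      rw [List.range'_succ, edgesOf_cons (by simp [List.range'_succ])] at h
      rcases List.mem_cons.1 h with h | h
      · have hx : x = s := by simpa using congrArg Prod.fst h
        have hy : y = s + 1 := by
          have := congrArg Prod.snd h
          simpa [List.range'_succ] using this
        omega
      · have := ih (s+1) h
        omega

lemma edgesOf_range {n x y : ℕ} (h : (x, y) ∈ edgesOf (List.range n)) :
    y = x + 1 ∧ y < n := by
  rw [List.range_eq_range'] at h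
  have := edgesOf_range' n 0 h
  omega

lemma headI_range {n : ℕ} (hn : 0 < n) : (List.range n).headI = 0 := by
  cases n with
  | zero => omega
  | succ n => rw [List.range_succ_eq_map]; rfl

lemma getLastI_range {n : ℕ} (hn : 0 < n) : (List.range n).getLastI = n - 1 := by
  cases n with
  | zero => omega
  | succ n => rw [List.range_succ, getLastI_concat]; omega

lemma range_cons {n : ℕ} (hn : 0 < n) : List.range n = 0 :: (List.range' 1 (n-1)) := by
  rw [List.range_eq_range']
  cases n with
  | zero => omega
  | succ n => rw [List.range'_succ]; rfl

end RangeLemmas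
end FlowUpdate
namespace FlowUpdate
set_option linter.unusedSectionVars false

instance : Inhabited GV := ⟨GV.s⟩

section PathChars

lemma edges_Xupd {n : ℕ} (hn : 0 < n) {e : GV × GV} (he : e ∈ edgesOf (Xupd n)) :
    e = (GV.s, GV.w1 0) ∨ (∃ j < n, e = (GV.w1 j, GV.w2 j)) ∨
    (∃ j, j + 1 < n ∧ e = (GV.w2 j, GV.w1 (j+1))) ∨ e = (GV.w2 (n-1), GV.t) := by
  have hpath : Xupd n
      = GV.s :: ((List.range n).flatMap (fun j => [GV.w1 j, GV.w2 j]) ++ [GV.t]) := by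
    simp [Xupd]
  rw [hpath, edgesOf_cons (flatMap_append_ne_nil _ _ _)] at he
  rcases List.mem_cons.1 he with he | he
  · left
    rw [he, range_cons hn, List.flatMap_cons]
    rfl
  · have := edgesOf_flat_aux _ _ (fun x => by simp) _ he
    rcases this with ⟨j, hj, hje⟩ | ⟨⟨q1, q2⟩, hq, hqe⟩ | ⟨hl, hle⟩
    · right; left
      exact ⟨j, List.mem_range.1 hj, by simpa [edgesOf] using hje⟩
    · obtain ⟨h1, h2⟩ := edgesOf_range (x := q1) (y := q2) hq
      right; right; left
      subst h1
      exact ⟨q1, by omega, by rw [hqe]; rfl⟩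
    · right; right; right
      rw [hle, getLastI_range hn]
      rfl

lemma edges_Dold {m : ℕ} (hm : 0 < m) {e : GV × GV} (he : e ∈ edgesOf (Dold m)) :
    e = (GV.s, GV.u 0) ∨ (∃ i < m, e = (GV.u i, GV.v i)) ∨
    (∃ i, i + 1 < m ∧ e = (GV.v i, GV.u (i+1))) ∨ e = (GV.v (m-1), GV.t) := by
  have hpath : Dold m
      = GV.s :: ((List.range m).flatMap (fun i => [GV.u i, GV.v i]) ++ [GV.t]) := by
    simp [Dold]
  rw [hpath, edgesOf_cons (flatMap_append_ne_nil _ _ _)] at he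
  rcases List.mem_cons.1 he with he | he
  · left
    rw [he, range_cons hm, List.flatMap_cons]
    rfl
  · have := edgesOf_flat_aux _ _ (fun x => by simp) _ he
    rcases this with ⟨j, hj, hje⟩ | ⟨⟨q1, q2⟩, hq, hqe⟩ | ⟨hl, hle⟩
    · right; left
      exact ⟨j, List.mem_range.1 hj, by simpa [edgesOf] using hje⟩
    · obtain ⟨h1, h2⟩ := edgesOf_range (x := q1) (y := q2) hq
      right; right; left
      subst h1
      exact ⟨q1, by omega, by rw [hqe]; rfl⟩
    · right; right; right
      rw [hle, getLastI_range hm]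
      rfl

lemma edges_Dupd {m : ℕ} (hm : 0 < m) (p : Fin 3) {e : GV × GV}
    (he : e ∈ edgesOf (Dupd m p)) :
    e = (GV.s, GV.u 0) ∨
    (∃ i < m, e = (GV.u i, GV.uu i p) ∨ e = (GV.uu i p, GV.vv i p) ∨ e = (GV.vv i p, GV.v i)) ∨
    (∃ i, i + 1 < m ∧ e = (GV.v i, GV.u (i+1))) ∨ e = (GV.v (m-1), GV.t) := by
  have hpath : Dupd m p
      = GV.s :: ((List.range m).flatMap
          (fun i => [GV.u i, GV.uu i p, GV.vv i p, GV.v i]) ++ [GV.t]) := by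
    simp [Dupd]
  rw [hpath, edgesOf_cons (flatMap_append_ne_nil _ _ _)] at he
  rcases List.mem_cons.1 he with he | he
  · left
    rw [he, range_cons hm, List.flatMap_cons]
    rfl
  · have := edgesOf_flat_aux _ _ (fun x => by simp) _ he
    rcases this with ⟨j, hj, hje⟩ | ⟨⟨q1, q2⟩, hq, hqe⟩ | ⟨hl, hle⟩
    · right; left
      refine ⟨j, List.mem_range.1 hj, ?_⟩
      simpa [edgesOf] using hje
    · obtain ⟨h1, h2⟩ := edgesOf_range (x := q1) (y := q2) hq
      right; right; left
      subst h1
      exact ⟨q1, by omega, by rw [hqe]; rfl⟩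
    · right; right; right
      rw [hle, getLastI_range hm]
      rfl

/-- Characterization of the edges within a variable block of `Xold`. -/
lemma edges_Xblock {C : List Clause} {j : ℕ} {pol : Bool} {e : GV × GV}
    (he : e ∈ edgesOf (GV.w1 j :: (litPath C j pol ++ [GV.w2 j]))) :
    (occ C j pol = [] ∧ e = (GV.w1 j, GV.w2 j)) ∨
    (occ C j pol ≠ [] ∧
      e = (GV.w1 j, GV.uu (occ C j pol).headI.1 (occ C j pol).headI.2)) ∨
    (∃ ab ∈ occ C j pol, e = (GV.uu ab.1 ab.2, GV.vv ab.1 ab.2)) ∨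
    (∃ q ∈ edgesOf (occ C j pol), e = (GV.vv q.1.1 q.1.2, GV.uu q.2.1 q.2.2)) ∨
    (occ C j pol ≠ [] ∧
      e = (GV.vv (occ C j pol).getLastI.1 (occ C j pol).getLastI.2, GV.w2 j)) := by
  have hlit : litPath C j pol
      = (occ C j pol).flatMap (fun ab => [GV.uu ab.1 ab.2, GV.vv ab.1 ab.2]) := rfl
  rw [hlit] at he
  rw [edgesOf_cons (flatMap_append_ne_nil _ _ _)] at he
  rcases List.mem_cons.1 he with he | he
  · cases hocc : occ C j pol with
    | nil =>
      left
      refine ⟨rfl, ?_⟩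
      rw [he, hocc]
      rfl
    | cons ab l' =>
      right; left
      refine ⟨by simp [hocc], ?_⟩
      rw [he, hocc, List.flatMap_cons]
      rfl
  · have := edgesOf_flat_aux _ _ (fun x => by simp) _ he
    rcases this with ⟨ab, hab, habe⟩ | ⟨q, hq, hqe⟩ | ⟨hl, hle⟩
    · right; right; left
      exact ⟨ab, hab, by simpa [edgesOf] using habe⟩
    · right; right; right; left
      exact ⟨q, hq, by rw [hqe]; rfl⟩
    · right; right; right; right
      exact ⟨hl, by rw [hle]; rfl⟩

lemma edges_Xold {C : List Clause} {n : ℕ} {pol : Bool} (hn : 0 < n) {e : GV × GV}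
    (he : e ∈ edgesOf (Xold C n pol)) :
    e = (GV.s, GV.w1 0) ∨
    (∃ j < n, e ∈ edgesOf (GV.w1 j :: (litPath C j pol ++ [GV.w2 j]))) ∨
    (∃ j, j + 1 < n ∧ e = (GV.w2 j, GV.w1 (j+1))) ∨ e = (GV.w2 (n-1), GV.t) := by
  have hB : ∀ j : ℕ, (GV.w1 j :: (litPath C j pol ++ [GV.w2 j])) ≠ [] := by simp
  have hgl : ∀ j : ℕ, (GV.w1 j :: (litPath C j pol ++ [GV.w2 j])).getLastI = GV.w2 j :=
    fun j => by rw [getLastI_cons (fun hh => by simp at hh), getLastI_concat]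
  have hpath : Xold C n pol
      = GV.s :: ((List.range n).flatMap
          (fun j => GV.w1 j :: (litPath C j pol ++ [GV.w2 j])) ++ [GV.t]) := by
    simp [Xold]
  rw [hpath, edgesOf_cons (flatMap_append_ne_nil _ _ _)] at he
  rcases List.mem_cons.1 he with he | he
  · left
    rw [he, range_cons hn, List.flatMap_cons]
    rfl
  · have := edgesOf_flat_aux _ _ hB _ he
    rcases this with ⟨j, hj, hje⟩ | ⟨⟨q1, q2⟩, hq, hqe⟩ | ⟨hl, hle⟩
    · right; left
      exact ⟨j, List.mem_range.1 hj, hje⟩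
    · obtain ⟨h1, h2⟩ := edgesOf_range (x := q1) (y := q2) hq
      right; right; left
      subst h1
      refine ⟨q1, by omega, ?_⟩
      rw [hqe, hgl]
      rfl
    · right; right; right
      rw [hle, hgl, getLastI_range hn]

end PathChars
end FlowUpdate
namespace FlowUpdate
set_option linter.unusedSectionVars false

section Occ

lemma mem_occ {C : List Clause} {j : ℕ} {pol : Bool} {ab : ℕ × Fin 3} :
    ab ∈ occ C j pol ↔
      ab.1 < C.length ∧ (C.getD ab.1 (fun _ => (0, true))) ab.2 = (j, pol) := by
  obtain ⟨a, b⟩ := ab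
  simp only [occ, List.mem_flatMap, List.mem_range, List.mem_filterMap, List.mem_finRange,
    true_and]
  constructor
  · rintro ⟨i, hi, p, hp⟩
    by_cases h : (C.getD i (fun _ => (0, true))) p = (j, pol)
    · rw [if_pos h] at hp
      simp only [Option.some.injEq, Prod.mk.injEq] at hp
      obtain ⟨rfl, rfl⟩ := hp
      exact ⟨hi, h⟩
    · rw [if_neg h] at hp; simp at hp
  · rintro ⟨ha, hb⟩
    exact ⟨a, ha, b, by rw [if_pos hb]⟩

lemma occ_nodup (C : List Clause) (j : ℕ) (pol : Bool) : (occ C j pol).Nodup := by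
  rw [occ, List.nodup_flatMap]
  constructor
  · intro i _
    apply List.Nodup.filterMap
    · intro p p' b hb hb'
      split at hb
      · simp only [Option.mem_def, Option.some.injEq] at hb
        split at hb'
        · simp only [Option.mem_def, Option.some.injEq] at hb'
          rw [← hb'] at hb
          simpa using (congrArg Prod.snd hb)
        · simp at hb'
      · simp at hb
    · exact List.nodup_finRange 3
  · refine List.Pairwise.imp ?_ (List.nodup_range (n := C.length))
    intro i i' hne
    intro ab hab hab'
    simp only [List.mem_filterMap, List.mem_finRange, true_and] at hab hab'
    exfalso
    obtain ⟨p, hp⟩ := hab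
    obtain ⟨p', hp'⟩ := hab'
    have h1 : ab.1 = i := by
      split at hp
      · simpa using (congrArg Prod.fst (Option.some.inj hp)).symm
      · simp at hp
    have h2 : ab.1 = i' := by
      split at hp'
      · simpa using (congrArg Prod.fst (Option.some.inj hp')).symm
      · simp at hp'
    exact hne (h1 ▸ h2)

lemma occ_var {C : List Clause} {j j' : ℕ} {pol : Bool} {ab : ℕ × Fin 3}
    (h : ab ∈ occ C j pol) (h' : ab ∈ occ C j' pol) : j = j' := by
  rw [mem_occ] at h h'
  have := h.2.symm.trans h'.2
  simpa using (congrArg Prod.fst this)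

end Occ
end FlowUpdate
namespace FlowUpdate
set_option linter.unusedSectionVars false

section Succ
variable {C : List Clause} {n m : ℕ} {pol : Bool} {x : GV}

lemma succ_Xupd_s (hn : 0 < n) (h : (GV.s, x) ∈ edgesOf (Xupd n)) : x = GV.w1 0 := by
  rcases edges_Xupd hn h with h | ⟨j, hj, h⟩ | ⟨j, hj, h⟩ | h <;> simp_all

lemma succ_Xupd_w1 {j : ℕ} (hn : 0 < n) (h : (GV.w1 j, x) ∈ edgesOf (Xupd n)) :
    x = GV.w2 j := by
  rcases edges_Xupd hn h with h | ⟨j', hj', h⟩ | ⟨j', hj', h⟩ | h <;> simp_all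

lemma succ_Xupd_w2 {j : ℕ} (hn : 0 < n) (h : (GV.w2 j, x) ∈ edgesOf (Xupd n)) :
    (j + 1 < n ∧ x = GV.w1 (j+1)) ∨ (x = GV.t ∧ j + 1 = n) := by
  rcases edges_Xupd hn h with h | ⟨j', hj', h⟩ | ⟨j', hj', h⟩ | h
  · simp_all
  · simp_all
  · left; simp_all; try omega
  · right; simp_all; try omega

lemma no_Xupd_u {i : ℕ} (hn : 0 < n) (h : (GV.u i, x) ∈ edgesOf (Xupd n)) : False := by
  rcases edges_Xupd hn h with h | ⟨j', hj', h⟩ | ⟨j', hj', h⟩ | h <;> simp_all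

lemma no_Xupd_v {i : ℕ} (hn : 0 < n) (h : (GV.v i, x) ∈ edgesOf (Xupd n)) : False := by
  rcases edges_Xupd hn h with h | ⟨j', hj', h⟩ | ⟨j', hj', h⟩ | h <;> simp_all

lemma no_Xupd_uu {i : ℕ} {p : Fin 3} (hn : 0 < n) (h : (GV.uu i p, x) ∈ edgesOf (Xupd n)) :
    False := by
  rcases edges_Xupd hn h with h | ⟨j', hj', h⟩ | ⟨j', hj', h⟩ | h <;> simp_all

lemma no_Xupd_vv {i : ℕ} {p : Fin 3} (hn : 0 < n) (h : (GV.vv i p, x) ∈ edgesOf (Xupd n)) :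
    False := by
  rcases edges_Xupd hn h with h | ⟨j', hj', h⟩ | ⟨j', hj', h⟩ | h <;> simp_all

lemma succ_Dold_s (hm : 0 < m) (h : (GV.s, x) ∈ edgesOf (Dold m)) : x = GV.u 0 := by
  rcases edges_Dold hm h with h | ⟨i', hi', h⟩ | ⟨i', hi', h⟩ | h <;> simp_all

lemma succ_Dold_u {i : ℕ} (hm : 0 < m) (h : (GV.u i, x) ∈ edgesOf (Dold m)) :
    x = GV.v i := by
  rcases edges_Dold hm h with h | ⟨i', hi', h⟩ | ⟨i', hi', h⟩ | h <;> simp_all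

lemma succ_Dold_v {i : ℕ} (hm : 0 < m) (h : (GV.v i, x) ∈ edgesOf (Dold m)) :
    (i + 1 < m ∧ x = GV.u (i+1)) ∨ (x = GV.t ∧ i + 1 = m) := by
  rcases edges_Dold hm h with h | ⟨i', hi', h⟩ | ⟨i', hi', h⟩ | h
  · simp_all
  · simp_all
  · left; simp_all; try omega
  · right; simp_all; try omega

lemma no_Dold_w1 {j : ℕ} (hm : 0 < m) (h : (GV.w1 j, x) ∈ edgesOf (Dold m)) : False := by
  rcases edges_Dold hm h with h | ⟨i', hi', h⟩ | ⟨i', hi', h⟩ | h <;> simp_all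

lemma no_Dold_w2 {j : ℕ} (hm : 0 < m) (h : (GV.w2 j, x) ∈ edgesOf (Dold m)) : False := by
  rcases edges_Dold hm h with h | ⟨i', hi', h⟩ | ⟨i', hi', h⟩ | h <;> simp_all

lemma no_Dold_uu {i : ℕ} {p : Fin 3} (hm : 0 < m) (h : (GV.uu i p, x) ∈ edgesOf (Dold m)) :
    False := by
  rcases edges_Dold hm h with h | ⟨i', hi', h⟩ | ⟨i', hi', h⟩ | h <;> simp_all

lemma no_Dold_vv {i : ℕ} {p : Fin 3} (hm : 0 < m) (h : (GV.vv i p, x) ∈ edgesOf (Dold m)) :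
    False := by
  rcases edges_Dold hm h with h | ⟨i', hi', h⟩ | ⟨i', hi', h⟩ | h <;> simp_all

lemma succ_Dupd_s {p : Fin 3} (hm : 0 < m) (h : (GV.s, x) ∈ edgesOf (Dupd m p)) :
    x = GV.u 0 := by
  rcases edges_Dupd hm p h with h | ⟨i', hi', h | h | h⟩ | ⟨i', hi', h⟩ | h <;> simp_all

lemma succ_Dupd_u {i : ℕ} {p : Fin 3} (hm : 0 < m) (h : (GV.u i, x) ∈ edgesOf (Dupd m p)) :
    x = GV.uu i p := by
  rcases edges_Dupd hm p h with h | ⟨i', hi', h | h | h⟩ | ⟨i', hi', h⟩ | h <;> simp_all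

lemma succ_Dupd_uu {a : ℕ} {b p : Fin 3} (hm : 0 < m)
    (h : (GV.uu a b, x) ∈ edgesOf (Dupd m p)) : x = GV.vv a b := by
  rcases edges_Dupd hm p h with h | ⟨i', hi', h | h | h⟩ | ⟨i', hi', h⟩ | h <;> simp_all

lemma succ_Dupd_vv {a : ℕ} {b p : Fin 3} (hm : 0 < m)
    (h : (GV.vv a b, x) ∈ edgesOf (Dupd m p)) : x = GV.v a := by
  rcases edges_Dupd hm p h with h | ⟨i', hi', h | h | h⟩ | ⟨i', hi', h⟩ | h <;> simp_all

lemma succ_Dupd_v {i : ℕ} {p : Fin 3} (hm : 0 < m) (h : (GV.v i, x) ∈ edgesOf (Dupd m p)) :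
    (i + 1 < m ∧ x = GV.u (i+1)) ∨ (x = GV.t ∧ i + 1 = m) := by
  rcases edges_Dupd hm p h with h | ⟨i', hi', h | h | h⟩ | ⟨i', hi', h⟩ | h
  · simp_all
  · simp_all
  · simp_all
  · simp_all
  · left; simp_all; try omega
  · right; simp_all; try omega

lemma no_Dupd_w1 {j : ℕ} {p : Fin 3} (hm : 0 < m) (h : (GV.w1 j, x) ∈ edgesOf (Dupd m p)) :
    False := by
  rcases edges_Dupd hm p h with h | ⟨i', hi', h | h | h⟩ | ⟨i', hi', h⟩ | h <;> simp_all

lemma no_Dupd_w2 {j : ℕ} {p : Fin 3} (hm : 0 < m) (h : (GV.w2 j, x) ∈ edgesOf (Dupd m p)) :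
    False := by
  rcases edges_Dupd hm p h with h | ⟨i', hi', h | h | h⟩ | ⟨i', hi', h⟩ | h <;> simp_all

lemma succ_Xold_s (hn : 0 < n) (h : (GV.s, x) ∈ edgesOf (Xold C n pol)) : x = GV.w1 0 := by
  rcases edges_Xold hn h with h | ⟨j', hj', h⟩ | ⟨j', hj', h⟩ | h
  · simp_all
  · exfalso
    rcases edges_Xblock h with ⟨_, h⟩ | ⟨_, h⟩ | ⟨ab, _, h⟩ | ⟨q, _, h⟩ | ⟨_, h⟩ <;> simp_all
  · simp_all
  · simp_all

lemma succ_Xold_w1 {j : ℕ} (hn : 0 < n) (h : (GV.w1 j, x) ∈ edgesOf (Xold C n pol)) :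
    (occ C j pol = [] ∧ x = GV.w2 j) ∨
    (occ C j pol ≠ [] ∧ x = GV.uu (occ C j pol).headI.1 (occ C j pol).headI.2) := by
  rcases edges_Xold hn h with h | ⟨j', hj', h⟩ | ⟨j', hj', h⟩ | h
  · simp_all
  · rcases edges_Xblock h with ⟨he, h⟩ | ⟨he, h⟩ | ⟨ab, _, h⟩ | ⟨q, _, h⟩ | ⟨he, h⟩
    · left
      simp only [Prod.mk.injEq, GV.w1.injEq] at h
      obtain ⟨rfl, rfl⟩ := h
      exact ⟨he, rfl⟩
    · right
      simp only [Prod.mk.injEq, GV.w1.injEq] at h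
      obtain ⟨rfl, rfl⟩ := h
      exact ⟨he, rfl⟩
    · simp_all
    · simp_all
    · simp_all
  · simp_all
  · simp_all

lemma succ_Xold_uu {a : ℕ} {b : Fin 3} (hn : 0 < n)
    (h : (GV.uu a b, x) ∈ edgesOf (Xold C n pol)) : x = GV.vv a b := by
  rcases edges_Xold hn h with h | ⟨j', hj', h⟩ | ⟨j', hj', h⟩ | h
  · simp_all
  · rcases edges_Xblock h with ⟨_, h⟩ | ⟨_, h⟩ | ⟨ab, _, h⟩ | ⟨q, _, h⟩ | ⟨_, h⟩ <;> simp_all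
  · simp_all
  · simp_all

lemma succ_Xold_vv {a : ℕ} {b : Fin 3} (hn : 0 < n)
    (h : (GV.vv a b, x) ∈ edgesOf (Xold C n pol)) :
    ∃ j < n, ((a, b) ∈ occ C j pol ∧
      ((∃ cd, ((a, b), cd) ∈ edgesOf (occ C j pol) ∧ x = GV.uu cd.1 cd.2) ∨
       ((occ C j pol).getLastI = (a, b) ∧ x = GV.w2 j))) := by
  rcases edges_Xold hn h with h | ⟨j', hj', h⟩ | ⟨j', hj', h⟩ | h
  · simp_all
  · rcases edges_Xblock h with ⟨_, h⟩ | ⟨_, h⟩ | ⟨ab, _, h⟩ | ⟨q, hq, h⟩ | ⟨he, h⟩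
    · simp_all
    · simp_all
    · simp_all
    · obtain ⟨⟨a1, b1⟩, ⟨a2, b2⟩⟩ := q
      simp only [Prod.mk.injEq, GV.vv.injEq] at h
      obtain ⟨⟨rfl, rfl⟩, rfl⟩ := h
      refine ⟨j', hj', fst_mem_of_mem_edgesOf hq, Or.inl ⟨(a2, b2), hq, rfl⟩⟩
    · simp only [Prod.mk.injEq, GV.vv.injEq] at h
      obtain ⟨⟨h1, h2⟩, rfl⟩ := h
      refine ⟨j', hj', ?_, Or.inr ⟨?_, rfl⟩⟩
      · rw [show ((a : ℕ), (b : Fin 3)) = (occ C j' pol).getLastI by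
          rw [Prod.ext_iff]; exact ⟨h1, h2⟩]
        exact mem_getLastI he
      · rw [Prod.ext_iff]; exact ⟨h1.symm, h2.symm⟩
  · simp_all
  · simp_all

lemma succ_Xold_w2 {j : ℕ} (hn : 0 < n) (h : (GV.w2 j, x) ∈ edgesOf (Xold C n pol)) :
    (j + 1 < n ∧ x = GV.w1 (j+1)) ∨ (x = GV.t ∧ j + 1 = n) := by
  rcases edges_Xold hn h with h | ⟨j', hj', h⟩ | ⟨j', hj', h⟩ | h
  · simp_all
  · exfalso
    rcases edges_Xblock h with ⟨_, h⟩ | ⟨_, h⟩ | ⟨ab, _, h⟩ | ⟨q, _, h⟩ | ⟨_, h⟩ <;> simp_all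
  · left; simp_all; try omega
  · right; simp_all; try omega

end Succ
end FlowUpdate
namespace FlowUpdate
set_option linter.unusedSectionVars false

section Walks
variable {E : GV × GV → Prop} {T : List GV} {W : Set GV} {C : List Clause} {n m : ℕ}
  {pol : Bool}

lemma mem_s {s0 t0 : GV} (hT : UFN.IsPathIn E s0 t0 T) : s0 ∈ T := by
  cases T with
  | nil => exact absurd hT.1 (by simp)
  | cons a T' =>
    have h := hT.1
    simp only [List.head?_cons, Option.some.injEq] at h
    rw [← h]
    exact List.mem_cons_self

lemma step {s0 t0 a : GV} (hT : UFN.IsPathIn E s0 t0 T) (ha : a ∈ T) (hat : a ≠ t0) :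
    ∃ x, (a, x) ∈ edgesOf T ∧ E (a, x) :=
  succ_exists hT.2.1 hT.2.2.1 ha hat

/-! ### Walks for the pair `B` (old path `Xupd`, update path `Dold`) -/

variable (hn : 0 < n) (hm : 0 < m)

section Walk5
variable (hE : ∀ e : GV × GV, E e →
    (e ∈ edgesOf (Xupd n) ∧ e.1 ∉ W) ∨ (e ∈ edgesOf (Dold m) ∧ e.1 ∈ W))
  (hT : UFN.IsPathIn E GV.s GV.t T)
include hn hm hE hT

lemma walk5_w_mem (hsW : GV.s ∉ W) : ∀ j, j < n → GV.w1 j ∈ T := by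
  intro j
  induction j with
  | zero =>
    intro hj
    obtain ⟨x, hxT, hxE⟩ := step hT (mem_s hT) (by simp)
    rcases hE _ hxE with ⟨hold, hW⟩ | ⟨hnew, hW⟩
    · rw [succ_Xupd_s hn hold] at hxT
      exact snd_mem_of_mem_edgesOf hxT
    · exact absurd hW hsW
  | succ j ih =>
    intro hj
    have hw1 : GV.w1 j ∈ T := ih (by omega)
    obtain ⟨x, hxT, hxE⟩ := step hT hw1 (by simp)
    have hx : x = GV.w2 j := by
      rcases hE _ hxE with ⟨hold, _⟩ | ⟨hnew, _⟩
      · exact succ_Xupd_w1 hn hold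
      · exact (no_Dold_w1 hm hnew).elim
    rw [hx] at hxT
    have hw2 : GV.w2 j ∈ T := snd_mem_of_mem_edgesOf hxT
    obtain ⟨y, hyT, hyE⟩ := step hT hw2 (by simp)
    have hy : y = GV.w1 (j+1) := by
      rcases hE _ hyE with ⟨hold, _⟩ | ⟨hnew, _⟩
      · rcases succ_Xupd_w2 hn hold with ⟨_, h⟩ | ⟨_, h⟩
        · exact h
        · exact absurd h (by omega)
      · exact (no_Dold_w2 hm hnew).elim
    rw [hy] at hyT
    exact snd_mem_of_mem_edgesOf hyT

lemma walk5_w (hsW : GV.s ∉ W) {j : ℕ} (hj : j < n) :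
    (GV.w1 j, GV.w2 j) ∈ edgesOf T := by
  obtain ⟨x, hxT, hxE⟩ := step hT (walk5_w_mem hn hm hE hT hsW j hj) (by simp)
  rcases hE _ hxE with ⟨hold, _⟩ | ⟨hnew, _⟩
  · rw [succ_Xupd_w1 hn hold] at hxT
    exact hxT
  · exact (no_Dold_w1 hm hnew).elim

lemma walk5_u_mem (hsW : GV.s ∈ W) : ∀ i, i < m → GV.u i ∈ T := by
  intro i
  induction i with
  | zero =>
    intro hi
    obtain ⟨x, hxT, hxE⟩ := step hT (mem_s hT) (by simp)
    rcases hE _ hxE with ⟨hold, hW⟩ | ⟨hnew, hW⟩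
    · exact absurd hsW hW
    · rw [succ_Dold_s hm hnew] at hxT
      exact snd_mem_of_mem_edgesOf hxT
  | succ i ih =>
    intro hi
    have hu : GV.u i ∈ T := ih (by omega)
    obtain ⟨x, hxT, hxE⟩ := step hT hu (by simp)
    have hx : x = GV.v i := by
      rcases hE _ hxE with ⟨hold, _⟩ | ⟨hnew, _⟩
      · exact (no_Xupd_u hn hold).elim
      · exact succ_Dold_u hm hnew
    rw [hx] at hxT
    obtain ⟨y, hyT, hyE⟩ := step hT (snd_mem_of_mem_edgesOf hxT) (by simp)
    have hy : y = GV.u (i+1) := by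
      rcases hE _ hyE with ⟨hold, _⟩ | ⟨hnew, _⟩
      · exact (no_Xupd_v hn hold).elim
      · rcases succ_Dold_v hm hnew with ⟨_, h⟩ | ⟨_, h⟩
        · exact h
        · exact absurd h (by omega)
    rw [hy] at hyT
    exact snd_mem_of_mem_edgesOf hyT

lemma walk5_u (hsW : GV.s ∈ W) {i : ℕ} (hi : i < m) :
    (GV.u i, GV.v i) ∈ edgesOf T := by
  obtain ⟨x, hxT, hxE⟩ := step hT (walk5_u_mem hn hm hE hT hsW i hi) (by simp)
  rcases hE _ hxE with ⟨hold, _⟩ | ⟨hnew, _⟩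
  · exact (no_Xupd_u hn hold).elim
  · rw [succ_Dold_u hm hnew] at hxT
    exact hxT

end Walk5

/-! ### Walks for the pairs `D_p` (old path `Dold`, update path `Dupd`) -/

section WalkD
variable {p : Fin 3}
  (hE : ∀ e : GV × GV, E e →
    (e ∈ edgesOf (Dold m) ∧ e.1 ∉ W) ∨ (e ∈ edgesOf (Dupd m p) ∧ e.1 ∈ W))
  (hT : UFN.IsPathIn E GV.s GV.t T)
include hm hE hT

lemma walkD_mem : ∀ i, i < m → GV.u i ∈ T := by
  intro i
  induction i with
  | zero =>
    intro hi
    obtain ⟨x, hxT, hxE⟩ := step hT (mem_s hT) (by simp)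
    have hx : x = GV.u 0 := by
      rcases hE _ hxE with ⟨hold, _⟩ | ⟨hnew, _⟩
      · exact succ_Dold_s hm hold
      · exact succ_Dupd_s hm hnew
    rw [hx] at hxT
    exact snd_mem_of_mem_edgesOf hxT
  | succ i ih =>
    intro hi
    have hu : GV.u i ∈ T := ih (by omega)
    obtain ⟨x, hxT, hxE⟩ := step hT hu (by simp)
    have hv : GV.v i ∈ T := by
      rcases hE _ hxE with ⟨hold, _⟩ | ⟨hnew, _⟩
      · rw [succ_Dold_u hm hold] at hxT
        exact snd_mem_of_mem_edgesOf hxT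
      · -- detour through uu/vv
        rw [succ_Dupd_u hm hnew] at hxT
        have huu : GV.uu i p ∈ T := snd_mem_of_mem_edgesOf hxT
        obtain ⟨y, hyT, hyE⟩ := step hT huu (by simp)
        have hy : y = GV.vv i p := by
          rcases hE _ hyE with ⟨hold', _⟩ | ⟨hnew', _⟩
          · exact (no_Dold_uu hm hold').elim
          · exact succ_Dupd_uu hm hnew'
        rw [hy] at hyT
        obtain ⟨z, hzT, hzE⟩ := step hT (snd_mem_of_mem_edgesOf hyT) (by simp)
        have hz : z = GV.v i := by
          rcases hE _ hzE with ⟨hold', _⟩ | ⟨hnew', _⟩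
          · exact (no_Dold_vv hm hold').elim
          · exact succ_Dupd_vv hm hnew'
        rw [hz] at hzT
        exact snd_mem_of_mem_edgesOf hzT
    obtain ⟨y, hyT, hyE⟩ := step hT hv (by simp)
    have hy : y = GV.u (i+1) := by
      rcases hE _ hyE with ⟨hold, _⟩ | ⟨hnew, _⟩
      · rcases succ_Dold_v hm hold with ⟨_, h⟩ | ⟨_, h⟩
        · exact h
        · exact absurd h (by omega)
      · rcases succ_Dupd_v hm hnew with ⟨_, h⟩ | ⟨_, h⟩
        · exact h
        · exact absurd h (by omega)
    rw [hy] at hyT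
    exact snd_mem_of_mem_edgesOf hyT

lemma walkD_edge_old {i : ℕ} (hi : i < m) (hW : GV.u i ∉ W) :
    (GV.u i, GV.v i) ∈ edgesOf T := by
  obtain ⟨x, hxT, hxE⟩ := step hT (walkD_mem hm hE hT i hi) (by simp)
  rcases hE _ hxE with ⟨hold, _⟩ | ⟨hnew, hW'⟩
  · rw [succ_Dold_u hm hold] at hxT
    exact hxT
  · exact absurd hW' hW

lemma walkD_edge_detour {i : ℕ} (hi : i < m) (hW : GV.u i ∈ W) :
    (GV.uu i p, GV.vv i p) ∈ edgesOf T := by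
  obtain ⟨x, hxT, hxE⟩ := step hT (walkD_mem hm hE hT i hi) (by simp)
  have hx : x = GV.uu i p := by
    rcases hE _ hxE with ⟨hold, hW'⟩ | ⟨hnew, _⟩
    · exact absurd hW hW'
    · exact succ_Dupd_u hm hnew
  rw [hx] at hxT
  obtain ⟨y, hyT, hyE⟩ := step hT (snd_mem_of_mem_edgesOf hxT) (by simp)
  have hy : y = GV.vv i p := by
    rcases hE _ hyE with ⟨hold, _⟩ | ⟨hnew, _⟩
    · exact (no_Dold_uu hm hold).elim
    · exact succ_Dupd_uu hm hnew
  rw [hy] at hyT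
  exact hyT

end WalkD

/-! ### Walks for the pairs `X`/`X̄` (old path `Xold`, update path `Xupd`) -/

section WalkX
variable (hE : ∀ e : GV × GV, E e →
    (e ∈ edgesOf (Xold C n pol) ∧ e.1 ∉ W) ∨ (e ∈ edgesOf (Xupd n) ∧ e.1 ∈ W))
  (hT : UFN.IsPathIn E GV.s GV.t T)
include hn hE hT

lemma walkX_corr : ∀ (l2 : List (ℕ × Fin 3)) (ab : ℕ × Fin 3) (l1 : List (ℕ × Fin 3))
    (j : ℕ), j < n → occ C j pol = l1 ++ ab :: l2 → GV.uu ab.1 ab.2 ∈ T →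
    GV.w2 j ∈ T ∧ ∀ cd : ℕ × Fin 3, (cd = ab ∨ cd ∈ l2) →
      (GV.uu cd.1 cd.2, GV.vv cd.1 cd.2) ∈ edgesOf T := by
  intro l2
  induction l2 with
  | nil =>
    intro ab l1 j hj hocc huu
    obtain ⟨x, hxT, hxE⟩ := step hT huu (by simp)
    have hx : x = GV.vv ab.1 ab.2 := by
      rcases hE _ hxE with ⟨hold, _⟩ | ⟨hnew, _⟩
      · exact succ_Xold_uu hn hold
      · exact (no_Xupd_uu hn hnew).elim
    rw [hx] at hxT
    have hvv : GV.vv ab.1 ab.2 ∈ T := snd_mem_of_mem_edgesOf hxT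
    obtain ⟨y, hyT, hyE⟩ := step hT hvv (by simp)
    have hy : y = GV.w2 j := by
      rcases hE _ hyE with ⟨hold, _⟩ | ⟨hnew, _⟩
      · obtain ⟨j'', hj'', hmem, hcase⟩ := succ_Xold_vv hn hold
        have habmem : ab ∈ occ C j pol := by
          rw [hocc]
          exact List.mem_append_right _ List.mem_cons_self
        have hjj : j'' = j := occ_var (by rwa [Prod.mk.eta] at hmem) habmem
        subst hjj
        rcases hcase with ⟨cd, hq, _⟩ | ⟨_, h⟩
        · obtain ⟨h2, _⟩ := nodup_succ (occ_nodup C j'' pol)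
            (by rwa [Prod.mk.eta] at hq) l1 [] hocc
          exact absurd rfl h2
        · exact h
      · exact (no_Xupd_vv hn hnew).elim
    rw [hy] at hyT
    refine ⟨snd_mem_of_mem_edgesOf hyT, ?_⟩
    rintro cd (rfl | hcd)
    · exact hxT
    · simp at hcd
  | cons ef l2' ih =>
    intro ab l1 j hj hocc huu
    obtain ⟨x, hxT, hxE⟩ := step hT huu (by simp)
    have hx : x = GV.vv ab.1 ab.2 := by
      rcases hE _ hxE with ⟨hold, _⟩ | ⟨hnew, _⟩
      · exact succ_Xold_uu hn hold
      · exact (no_Xupd_uu hn hnew).elim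
    rw [hx] at hxT
    have hvv : GV.vv ab.1 ab.2 ∈ T := snd_mem_of_mem_edgesOf hxT
    obtain ⟨y, hyT, hyE⟩ := step hT hvv (by simp)
    have hy : y = GV.uu ef.1 ef.2 := by
      rcases hE _ hyE with ⟨hold, _⟩ | ⟨hnew, _⟩
      · obtain ⟨j'', hj'', hmem, hcase⟩ := succ_Xold_vv hn hold
        have habmem : ab ∈ occ C j pol := by
          rw [hocc]
          exact List.mem_append_right _ List.mem_cons_self
        have hjj : j'' = j := occ_var (by rwa [Prod.mk.eta] at hmem) habmem
        subst hjj
        rcases hcase with ⟨cd, hq, hycd⟩ | ⟨hlast, _⟩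
        · obtain ⟨h2, hhead⟩ := nodup_succ (occ_nodup C j'' pol)
            (by rwa [Prod.mk.eta] at hq) l1 (ef :: l2') hocc
          rw [hycd, hhead]
          rfl
        · exfalso
          have h1 : (l1 ++ ab :: ef :: l2').getLastI = ab := by
            rw [← hocc]
            rwa [Prod.mk.eta] at hlast
          exact absurd (nodup_getLastI (hocc ▸ occ_nodup C j'' pol) h1) (by simp)
      · exact (no_Xupd_vv hn hnew).elim
    rw [hy] at hyT
    obtain ⟨hw2, hall⟩ := ih ef (l1 ++ [ab]) j hj
      (by rw [hocc, List.append_assoc]; rfl) (snd_mem_of_mem_edgesOf hyT)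
    refine ⟨hw2, ?_⟩
    rintro cd (rfl | hcd)
    · exact hxT
    · rcases List.mem_cons.1 hcd with rfl | hcd'
      · exact hall cd (Or.inl rfl)
      · exact hall cd (Or.inr hcd')

lemma walkX_block {j : ℕ} (hj : j < n) (hw1 : GV.w1 j ∈ T) :
    GV.w2 j ∈ T ∧ (GV.w1 j ∈ W → (GV.w1 j, GV.w2 j) ∈ edgesOf T) ∧
      (GV.w1 j ∉ W → ∀ cd ∈ occ C j pol, (GV.uu cd.1 cd.2, GV.vv cd.1 cd.2) ∈ edgesOf T) := by
  obtain ⟨x, hxT, hxE⟩ := step hT hw1 (by simp)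
  rcases hE _ hxE with ⟨hold, hW⟩ | ⟨hnew, hW⟩
  · rcases succ_Xold_w1 hn hold with ⟨hocc, hx⟩ | ⟨hocc, hx⟩
    · rw [hx] at hxT
      exact ⟨snd_mem_of_mem_edgesOf hxT, fun h => absurd h hW,
        fun _ cd hcd => by rw [hocc] at hcd; simp at hcd⟩
    · rw [hx] at hxT
      cases hocc2 : occ C j pol with
      | nil => exact absurd hocc2 hocc
      | cons ab l' =>
        rw [hocc2] at hxT
        have huu : GV.uu ab.1 ab.2 ∈ T := by
          have := snd_mem_of_mem_edgesOf hxT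
          simpa using this
        obtain ⟨hw2, hall⟩ := walkX_corr hn hE hT l' ab [] j hj (by rw [hocc2]; rfl) huu
        refine ⟨hw2, fun h => absurd h hW, fun _ cd hcd => ?_⟩
        exact hall cd (List.mem_cons.1 hcd)
  · have hx : x = GV.w2 j := succ_Xupd_w1 hn hnew
    rw [hx] at hxT
    exact ⟨snd_mem_of_mem_edgesOf hxT, fun _ => hxT, fun h => absurd hW h⟩

lemma walkX_mem : ∀ j, j < n → GV.w1 j ∈ T := by
  intro j
  induction j with
  | zero =>
    intro hj
    obtain ⟨x, hxT, hxE⟩ := step hT (mem_s hT) (by simp)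
    have hx : x = GV.w1 0 := by
      rcases hE _ hxE with ⟨hold, _⟩ | ⟨hnew, _⟩
      · exact succ_Xold_s hn hold
      · exact succ_Xupd_s hn hnew
    rw [hx] at hxT
    exact snd_mem_of_mem_edgesOf hxT
  | succ j ih =>
    intro hj
    have hw2 : GV.w2 j ∈ T := (walkX_block hn hE hT (by omega) (ih (by omega))).1
    obtain ⟨y, hyT, hyE⟩ := step hT hw2 (by simp)
    have hy : y = GV.w1 (j+1) := by
      rcases hE _ hyE with ⟨hold, _⟩ | ⟨hnew, _⟩
      · rcases succ_Xold_w2 hn hold with ⟨_, h⟩ | ⟨_, h⟩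
        · exact h
        · exact absurd h (by omega)
      · rcases succ_Xupd_w2 hn hnew with ⟨_, h⟩ | ⟨_, h⟩
        · exact h
        · exact absurd h (by omega)
    rw [hy] at hyT
    exact snd_mem_of_mem_edgesOf hyT

lemma walkX_edge_w {j : ℕ} (hj : j < n) (hW : GV.w1 j ∈ W) :
    (GV.w1 j, GV.w2 j) ∈ edgesOf T :=
  (walkX_block hn hE hT hj (walkX_mem hn hE hT j hj)).2.1 hW

lemma walkX_edge_detour {j : ℕ} (hj : j < n) (hW : GV.w1 j ∉ W) {cd : ℕ × Fin 3}
    (hcd : cd ∈ occ C j pol) : (GV.uu cd.1 cd.2, GV.vv cd.1 cd.2) ∈ edgesOf T :=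
  (walkX_block hn hE hT hj (walkX_mem hn hE hT j hj)).2.2 hW cd hcd

end WalkX
end Walks
end FlowUpdate
namespace FlowUpdate
def dIdx (p : Fin 3) : Fin 6 := ⟨p.1 + 2, by omega⟩
end FlowUpdate
open FlowUpdate in
/-- If `G(C)` admits a feasible update sequence, then `C` is
satisfiable: setting `σ (x j) = 1` iff `(w1 j, X)` is resolved strictly before
the round of the update `(s, B)` (which assigns `0` whenever `(w1 j, X̄)` is
resolved before that round, and `0`, arbitrarily, if neither is) yields a
well-defined satisfying assignment. -/
theorem stmt12 (C : List Clause) (n : ℕ) (hC : GoodFormula C n)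
    (R : GV × Fin 6 → ℕ) (hR : (GC C n).Feasible R) :
    Satisfies C (fun j => decide (R (GV.w1 j, 0) < R (GV.s, 5))) := by
  intro cl hcl
  obtain ⟨i, hilen, hCi⟩ := List.mem_iff_getElem.1 hcl
  have hn : 0 < n := by have := hC cl hcl 0; omega
  have hm : 0 < C.length := by omega
  have hgetD : C.getD i (fun _ => (0, true)) = cl := by
    rw [List.getD_eq_getElem?_getD, List.getElem?_eq_getElem hilen, Option.getD_some, hCi]
  have hdem : ∀ k : Fin 6, (GC C n).demand k = 1 := fun _ => rfl
  have hDmat : ∀ p : Fin 3,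
      (GC C n).old (dIdx p) = Dold C.length ∧ (GC C n).new (dIdx p) = Dupd C.length p := by
    intro p; fin_cases p <;> exact ⟨rfl, rfl⟩
  have hne0 : (0 : Fin 6) ≠ dIdx ((0:Fin 3)) := by decide
  set r := R (GV.s, (5 : Fin 6)) with hr
  -- Round r with S = {(s, B)} : pair B uses the edge (u i, v i)
  obtain ⟨T, hT, hcap⟩ := hR r {(GV.s, (5 : Fin 6))}
    (by rintro u hu; rw [Set.mem_singleton_iff] at hu; rw [hu])
  set U : Set (GV × Fin 6) := {u | R u < r} ∪ {(GV.s, (5:Fin 6))} with hU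
  have hE5 : ∀ e : GV × GV, (GC C n).active U 5 e →
      (e ∈ edgesOf (Xupd n) ∧ e.1 ∉ {v : GV | (v, (5:Fin 6)) ∈ U}) ∨
      (e ∈ edgesOf (Dold C.length) ∧ e.1 ∈ {v : GV | (v, (5:Fin 6)) ∈ U}) := fun _ he => he
  have h5 : (GV.u i, GV.v i) ∈ edgesOf (T 5) :=
    walk5_u hn hm hE5 (hT 5).1 (Or.inr rfl) hilen
  -- some D_p was updated at u i before round r
  have hex : ∃ p : Fin 3, R (GV.u i, dIdx p) < r := by
    by_contra hno
    push_neg at hno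
    have hDp : ∀ p : Fin 3, (GV.u i, GV.v i) ∈ edgesOf (T (dIdx p)) := by
      intro p
      have hWp : GV.u i ∉ {v : GV | (v, dIdx p) ∈ U} := by
        intro hmem
        rcases hmem with h | h
        · exact absurd h (not_lt.2 (hno p))
        · simp at h
      have hEp : ∀ e : GV × GV, (GC C n).active U (dIdx p) e →
          (e ∈ edgesOf (Dold C.length) ∧ e.1 ∉ {v : GV | (v, dIdx p) ∈ U}) ∨
          (e ∈ edgesOf (Dupd C.length p) ∧ e.1 ∈ {v : GV | (v, dIdx p) ∈ U}) := by
        intro e he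
        rcases he with ⟨h1, h2⟩ | ⟨h1, h2⟩
        · exact Or.inl ⟨by rw [← (hDmat p).1]; exact h1, h2⟩
        · exact Or.inr ⟨by rw [← (hDmat p).2]; exact h1, h2⟩
      exact walkD_edge_old hm hEp (hT (dIdx p)).1 hilen hWp
    have h2' : (GV.u i, GV.v i) ∈ edgesOf (T 2) := hDp 0
    have h3' : (GV.u i, GV.v i) ∈ edgesOf (T 3) := hDp 1
    have h4' : (GV.u i, GV.v i) ∈ edgesOf (T 4) := hDp 2
    have hc := hcap (GV.u i) (GV.v i)
    rw [Fin.sum_univ_six] at hc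
    simp only [hdem] at hc
    rw [if_pos h2', if_pos h3', if_pos h4', if_pos h5] at hc
    have hcval : (GC C n).cap (GV.u i) (GV.v i) = 3 := by simp [GC, capC]
    rw [hcval] at hc
    split_ifs at hc <;> omega
  obtain ⟨phat, hphat⟩ := hex
  have hjn : (cl phat).1 < n := hC cl hcl phat
  have hocc : (i, phat) ∈ occ C (cl phat).1 (cl phat).2 := by
    rw [mem_occ]
    refine ⟨hilen, ?_⟩
    show C.getD i (fun _ => (0, true)) phat = _
    rw [hgetD]
  -- Key step: the corresponding literal pair was updated at w1 j before round R(u i, D_phat)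
  have key : ∀ (LL : Fin 6) (pol : Bool), (GC C n).old LL = Xold C n pol →
      (GC C n).new LL = Xupd n → LL ≠ dIdx phat → (i, phat) ∈ occ C (cl phat).1 pol →
      R (GV.w1 (cl phat).1, LL) < R (GV.u i, dIdx phat) := by
    intro LL pol hLold hLnew hLne hoccL
    by_contra hnot
    push_neg at hnot
    obtain ⟨T', hT', hcap'⟩ := hR (R (GV.u i, dIdx phat)) {(GV.u i, dIdx phat)}
      (by rintro u hu; rw [Set.mem_singleton_iff] at hu; rw [hu])
    set U2 : Set (GV × Fin 6) :=
      {u | R u < R (GV.u i, dIdx phat)} ∪ {(GV.u i, dIdx phat)} with hU2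
    have hEd : ∀ e : GV × GV, (GC C n).active U2 (dIdx phat) e →
        (e ∈ edgesOf (Dold C.length) ∧ e.1 ∉ {v : GV | (v, dIdx phat) ∈ U2}) ∨
        (e ∈ edgesOf (Dupd C.length phat) ∧ e.1 ∈ {v : GV | (v, dIdx phat) ∈ U2}) := by
      intro e he
      rcases he with ⟨h1, h2⟩ | ⟨h1, h2⟩
      · exact Or.inl ⟨by rw [← (hDmat phat).1]; exact h1, h2⟩
      · exact Or.inr ⟨by rw [← (hDmat phat).2]; exact h1, h2⟩
    have hd1 : (GV.uu i phat, GV.vv i phat) ∈ edgesOf (T' (dIdx phat)) :=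
      walkD_edge_detour hm hEd (hT' (dIdx phat)).1 hilen (Or.inr rfl)
    have hWL : GV.w1 (cl phat).1 ∉ {v : GV | (v, LL) ∈ U2} := by
      intro hmem
      rcases hmem with h | h
      · exact absurd h (not_lt.2 hnot)
      · simp at h
    have hEL : ∀ e : GV × GV, (GC C n).active U2 LL e →
        (e ∈ edgesOf (Xold C n pol) ∧ e.1 ∉ {v : GV | (v, LL) ∈ U2}) ∨
        (e ∈ edgesOf (Xupd n) ∧ e.1 ∈ {v : GV | (v, LL) ∈ U2}) := by
      intro e he
      rcases he with ⟨h1, h2⟩ | ⟨h1, h2⟩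
      · exact Or.inl ⟨by rw [← hLold]; exact h1, h2⟩
      · exact Or.inr ⟨by rw [← hLnew]; exact h1, h2⟩
    have hd2 : (GV.uu i phat, GV.vv i phat) ∈ edgesOf (T' LL) :=
      walkX_edge_detour hn hEL (hT' LL).1 hjn hWL hoccL
    have hge := Finset.sum_le_sum_of_subset_of_nonneg
      (Finset.subset_univ ({LL, dIdx phat} : Finset (Fin 6)))
      (fun k _ _ => Nat.zero_le ((fun k => if (GV.uu i phat, GV.vv i phat) ∈ edgesOf (T' k)
        then (GC C n).demand k else 0) k))
    rw [Finset.sum_pair hLne, if_pos hd2, if_pos hd1, hdem, hdem] at hge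
    have hc := hcap' (GV.uu i phat) (GV.vv i phat)
    have hcval : (GC C n).cap (GV.uu i phat) (GV.vv i phat) = 1 := by simp [GC, capC]
    rw [hcval] at hc
    omega
  refine ⟨phat, ?_⟩
  cases hpol : (cl phat).2 with
  | true =>
    have hlt : R (GV.w1 (cl phat).1, 0) < r :=
      lt_trans (key 0 true rfl rfl (by intro h; have := congrArg Fin.val h; simp [dIdx] at this) (hpol ▸ hocc)) hphat
    simp [hlt]
  | false =>
    have h1r : R (GV.w1 (cl phat).1, 1) < r :=
      lt_trans (key 1 false rfl rfl (by intro h; have := congrArg Fin.val h; simp [dIdx] at this) (hpol ▸ hocc)) hphat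
    have h0 : ¬ R (GV.w1 (cl phat).1, 0) < r := by
      intro h0lt
      obtain ⟨T0, hT0, hcap0⟩ := hR r ∅ (fun u hu => hu.elim)
      set U0 : Set (GV × Fin 6) := {u : GV × Fin 6 | R u < r} ∪ ∅ with hU0
      have hsW : GV.s ∉ {v : GV | (v, (5:Fin 6)) ∈ U0} := by
        intro h
        rcases h with h | h
        · have h' : R (GV.s, (5:Fin 6)) < r := h
          omega
        · exact h.elim
      have hE5' : ∀ e : GV × GV, (GC C n).active U0 5 e →
          (e ∈ edgesOf (Xupd n) ∧ e.1 ∉ {v : GV | (v, (5:Fin 6)) ∈ U0}) ∨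
          (e ∈ edgesOf (Dold C.length) ∧ e.1 ∈ {v : GV | (v, (5:Fin 6)) ∈ U0}) :=
        fun _ he => he
      have e5 : (GV.w1 (cl phat).1, GV.w2 (cl phat).1) ∈ edgesOf (T0 5) :=
        walk5_w hn hm hE5' (hT0 5).1 hsW hjn
      have hE0 : ∀ e : GV × GV, (GC C n).active U0 0 e →
          (e ∈ edgesOf (Xold C n true) ∧ e.1 ∉ {v : GV | (v, (0:Fin 6)) ∈ U0}) ∨
          (e ∈ edgesOf (Xupd n) ∧ e.1 ∈ {v : GV | (v, (0:Fin 6)) ∈ U0}) := fun _ he => he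
      have hE1 : ∀ e : GV × GV, (GC C n).active U0 1 e →
          (e ∈ edgesOf (Xold C n false) ∧ e.1 ∉ {v : GV | (v, (1:Fin 6)) ∈ U0}) ∨
          (e ∈ edgesOf (Xupd n) ∧ e.1 ∈ {v : GV | (v, (1:Fin 6)) ∈ U0}) := fun _ he => he
      have e0 : (GV.w1 (cl phat).1, GV.w2 (cl phat).1) ∈ edgesOf (T0 0) :=
        walkX_edge_w hn hE0 (hT0 0).1 hjn (Or.inl h0lt)
      have e1 : (GV.w1 (cl phat).1, GV.w2 (cl phat).1) ∈ edgesOf (T0 1) :=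
        walkX_edge_w hn hE1 (hT0 1).1 hjn (Or.inl h1r)
      have hc := hcap0 (GV.w1 (cl phat).1) (GV.w2 (cl phat).1)
      rw [Fin.sum_univ_six] at hc
      simp only [hdem] at hc
      rw [if_pos e0, if_pos e1, if_pos e5] at hc
      have hcval : (GC C n).cap (GV.w1 (cl phat).1) (GV.w2 (cl phat).1) = 2 := by
        simp [GC, capC]
      rw [hcval] at hc
      split_ifs at hc <;> omega
    simp [h0]
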